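/- Let A be a graded ring such that A_+ is finitely generated as a right ideal. Let M be a right A-module and K ⊆ M a submodule such that every element of K is annihilated by A_{≥n} for some n, and every element of the quotient module M/K is annihilated by A_{≥n} for some n. Then every element of M is annihilated by A_{≥n} for some n. (The extension-closedness established in the proof of Proposition 3.4: the class of modules all of whose elements are annihilated by some A_{≥n} is closed under extensions.) -/

import Mathlib

/-!
Extension-closedness from the proof of Proposition 3.4: if `A_+` is finitely
generated as a right ideal, `K ⊆ M` is a submodule of a right `A`-module such that
every element of `K` and every element of `M/K` is annihilated by some tail
`A_{≥ n}`, then every element of `M` is annihilated by some tail `A_{≥ n}`.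
-/

/-- The tail `A_{≥ n}`: elements all of whose homogeneous components have
degree `≥ n`.  `A_+ = A_{≥ 1}`. -/
def geIdeal {A : Type*} [Ring A] (𝒜 : ℕ → AddSubgroup A) [GradedRing 𝒜]
    (n : ℕ) : Set A :=
  {x : A | ∀ m : ℕ, m < n → ((DirectSum.decompose 𝒜 x m : 𝒜 m) : A) = 0}

/-- The right ideal of `A` generated by a set `s`. -/
def rightIdealSpan {A : Type*} [Ring A] (s : Set A) : Set A :=
  (AddSubgroup.closure {y : A | ∃ a ∈ s, ∃ r : A, y = a * r} : AddSubgroup A)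

/-- `I` is finitely generated as a right ideal. -/
def IsFGRightIdealSet {A : Type*} [Ring A] (I : Set A) : Prop :=
  ∃ s : Finset A, I = rightIdealSpan (s : Set A)

section Aux

variable {A : Type*} [Ring A] (𝒜 : ℕ → AddSubgroup A) [GradedRing 𝒜]

lemma mem_geIdeal_of_mem_graded {e n : ℕ} (h : n ≤ e) {x : A} (hx : x ∈ 𝒜 e) :
    x ∈ geIdeal 𝒜 n := fun m hm =>
  DirectSum.decompose_of_mem_ne 𝒜 hx (by omega)

lemma mul_mem_geIdeal {g : A} {dg : ℕ} (hg : g ∈ 𝒜 dg) (hdg : 1 ≤ dg)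
    {a : A} {c : ℕ} (ha : a ∈ geIdeal 𝒜 c) : g * a ∈ geIdeal 𝒜 (c + 1) := by
  intro m hm
  by_cases hle : dg ≤ m
  · rw [DirectSum.coe_decompose_mul_of_left_mem_of_le 𝒜 hg hle, ha (m - dg) (by omega),
      mul_zero]
  · exact DirectSum.coe_decompose_mul_of_left_mem_of_not_le 𝒜 hg hle

/-- One step of homogeneous decomposition along homogeneous generators of `A_+`. -/
lemma decomp_step {ι : Type*} [Fintype ι] (g : ι → A) (d : ι → ℕ)
    (hg : ∀ i, g i ∈ 𝒜 (d i))
    (hgen : ∀ x ∈ geIdeal 𝒜 1, ∃ u : ι → A, x = ∑ i, g i * u i)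
    {x : A} {dx : ℕ} (hx : x ∈ 𝒜 dx) (hdx : 1 ≤ dx) :
    ∃ r : ι → A, x = ∑ i, g i * r i ∧
      ∀ i, r i = 0 ∨ (d i ≤ dx ∧ r i ∈ 𝒜 (dx - d i)) := by
  classical
  obtain ⟨u, hu⟩ := hgen x (mem_geIdeal_of_mem_graded 𝒜 hdx hx)
  refine ⟨fun i => if d i ≤ dx then (DirectSum.decompose 𝒜 (u i) (dx - d i) : A) else 0,
    ?_, ?_⟩
  · have h1 : x = (DirectSum.decompose 𝒜 (∑ i, g i * u i) dx : A) := by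
      rw [← hu, DirectSum.decompose_of_mem_same 𝒜 hx]
    have h2 : (DirectSum.decompose 𝒜 (∑ i, g i * u i) dx : A)
        = ∑ i, (DirectSum.decompose 𝒜 (g i * u i) dx : A) := by
      simpa only [GradedRing.proj_apply] using
        map_sum (GradedRing.proj 𝒜 dx) (fun i => g i * u i) Finset.univ
    rw [h1, h2]
    refine Finset.sum_congr rfl fun i _ => ?_
    dsimp only
    by_cases hle : d i ≤ dx
    · rw [DirectSum.coe_decompose_mul_of_left_mem_of_le 𝒜 (hg i) hle, if_pos hle]
    · rw [DirectSum.coe_decompose_mul_of_left_mem_of_not_le 𝒜 (hg i) hle, if_neg hle,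
        mul_zero]
  · intro i
    dsimp only
    by_cases hle : d i ≤ dx
    · exact Or.inr ⟨hle, by rw [if_pos hle]; exact SetLike.coe_mem _⟩
    · exact Or.inl (if_neg hle)

lemma op_sum_smul {M : Type*} [AddCommGroup M] [Module Aᵐᵒᵖ M]
    {β : Type*} (t : Finset β) (f : β → A) (m : M) :
    MulOpposite.op (∑ j ∈ t, f j) • m = ∑ j ∈ t, MulOpposite.op (f j) • m := by
  have h := map_sum (MulOpposite.opAddEquiv (α := A)) f t
  simp only [MulOpposite.opAddEquiv_apply] at h
  rw [h, Finset.sum_smul]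

/-- The main induction. -/
lemma aux_induction {ι : Type*} [Fintype ι] (g : ι → A) (d : ι → ℕ)
    (hg : ∀ i, g i ∈ 𝒜 (d i)) (hd : ∀ i, 1 ≤ d i)
    (hgen : ∀ x ∈ geIdeal 𝒜 1, ∃ u : ι → A, x = ∑ i, g i * u i)
    (M : Type*) [AddCommGroup M] [Module Aᵐᵒᵖ M] (K : Submodule Aᵐᵒᵖ M)
    (hK : ∀ x ∈ K, ∃ n : ℕ, ∀ a ∈ geIdeal 𝒜 n, MulOpposite.op a • x = 0)
    (c : ℕ) :
    ∀ m : M, (∀ a ∈ geIdeal 𝒜 c,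
        MulOpposite.op a • (Submodule.Quotient.mk m : M ⧸ K) = 0) →
      ∃ n : ℕ, ∀ a ∈ geIdeal 𝒜 n, MulOpposite.op a • m = 0 := by
  classical
  induction c with
  | zero =>
    intro m h
    have h1 : (1 : A) ∈ geIdeal 𝒜 0 := fun j hj => absurd hj (Nat.not_lt_zero j)
    have := h 1 h1
    rw [MulOpposite.op_one, one_smul] at this
    exact hK m ((Submodule.Quotient.mk_eq_zero K).mp this)
  | succ c ih =>
    intro m h
    have hstep : ∀ i : ι, ∃ n : ℕ, ∀ a ∈ geIdeal 𝒜 n,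
        MulOpposite.op a • (MulOpposite.op (g i) • m) = 0 := by
      intro i
      refine ih (MulOpposite.op (g i) • m) (fun a ha => ?_)
      have hga : g i * a ∈ geIdeal 𝒜 (c + 1) := mul_mem_geIdeal 𝒜 (hg i) (hd i) ha
      calc MulOpposite.op a • (Submodule.Quotient.mk (MulOpposite.op (g i) • m) : M ⧸ K)
          = MulOpposite.op (g i * a) • (Submodule.Quotient.mk m : M ⧸ K) := by
            rw [← Submodule.Quotient.mk_smul, ← Submodule.Quotient.mk_smul,
              MulOpposite.op_mul, mul_smul]
        _ = 0 := h _ hga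
    choose n hn using hstep
    refine ⟨(Finset.univ.sup fun i => n i + d i) + 1, fun a ha => ?_⟩
    set N := (Finset.univ.sup fun i => n i + d i) + 1 with hN
    have key : ∀ (x : A) (dx : ℕ), x ∈ 𝒜 dx → N ≤ dx → MulOpposite.op x • m = 0 := by
      intro x dx hx hdx
      obtain ⟨r, hr, hri⟩ := decomp_step 𝒜 g d hg hgen hx (by omega)
      rw [hr, op_sum_smul]
      refine Finset.sum_eq_zero fun i _ => ?_
      rcases hri i with h0 | ⟨hle, hmem⟩
      · rw [h0, mul_zero, MulOpposite.op_zero, zero_smul]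
      · have hni : n i + d i ≤ Finset.univ.sup fun j => n j + d j :=
          Finset.le_sup (f := fun j => n j + d j) (Finset.mem_univ i)
        have : r i ∈ geIdeal 𝒜 (n i) :=
          mem_geIdeal_of_mem_graded 𝒜 (by omega) hmem
        rw [MulOpposite.op_mul, mul_smul]
        exact hn i (r i) this
    have hsupp := DirectSum.sum_support_decompose 𝒜 a
    rw [← hsupp, op_sum_smul]
    refine Finset.sum_eq_zero fun j hj => ?_
    by_cases hjN : N ≤ j
    · exact key _ j (SetLike.coe_mem _) hjN
    · rw [ha j (by omega), MulOpposite.op_zero, zero_smul]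

end Aux

/-- Extension-closedness of the class of modules all of whose elements are
annihilated by some tail `A_{≥ n}` (proof of Proposition 3.4). -/
theorem tail_torsion_closed_under_extensions {A : Type*} [Ring A]
    (𝒜 : ℕ → AddSubgroup A) [GradedRing 𝒜]
    (hfg : IsFGRightIdealSet (geIdeal 𝒜 1))
    (M : Type*) [AddCommGroup M] [Module Aᵐᵒᵖ M] (K : Submodule Aᵐᵒᵖ M)
    (hK : ∀ x ∈ K, ∃ n : ℕ, ∀ a ∈ geIdeal 𝒜 n, MulOpposite.op a • x = 0)
    (hMK : ∀ y : M ⧸ K, ∃ n : ℕ, ∀ a ∈ geIdeal 𝒜 n, MulOpposite.op a • y = 0) :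
    ∀ m : M, ∃ n : ℕ, ∀ a ∈ geIdeal 𝒜 n, MulOpposite.op a • m = 0 := by
  classical
  obtain ⟨s, hs⟩ := hfg
  set Nb := s.sup (fun a => (DirectSum.decompose 𝒜 a).support.sup id) with hNb
  -- generators
  set g : ↥s × Fin Nb → A :=
    fun i => (DirectSum.decompose 𝒜 (i.1 : A) (i.2.1 + 1) : A) with hgdef
  set d : ↥s × Fin Nb → ℕ := fun i => i.2.1 + 1 with hddef
  have hg : ∀ i, g i ∈ 𝒜 (d i) := fun i => SetLike.coe_mem _
  have hd : ∀ i, 1 ≤ d i := fun i => Nat.succ_le_succ (Nat.zero_le _)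
  have hmem_s : ∀ a ∈ s, a ∈ geIdeal 𝒜 1 := by
    intro a ha
    rw [hs]
    exact AddSubgroup.subset_closure ⟨a, ha, 1, (mul_one a).symm⟩
  have hdecomp_a : ∀ a ∈ s, a = ∑ j : Fin Nb, (DirectSum.decompose 𝒜 a (j.1 + 1) : A) := by
    intro a ha
    have h0 : (DirectSum.decompose 𝒜 a 0 : A) = 0 := hmem_s a ha 0 Nat.zero_lt_one
    have hsupp : (DirectSum.decompose 𝒜 a).support ⊆ Finset.range (Nb + 1) := by
      intro j hj
      have h1 : j ≤ (DirectSum.decompose 𝒜 a).support.sup id := Finset.le_sup (f := id) hj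
      have h2 : (DirectSum.decompose 𝒜 a).support.sup id ≤ Nb :=
        Finset.le_sup (f := fun a => (DirectSum.decompose 𝒜 a).support.sup id) ha
      exact Finset.mem_range.mpr (by omega)
    calc a = ∑ j ∈ (DirectSum.decompose 𝒜 a).support, (DirectSum.decompose 𝒜 a j : A) :=
        (DirectSum.sum_support_decompose 𝒜 a).symm
      _ = ∑ j ∈ Finset.range (Nb + 1), (DirectSum.decompose 𝒜 a j : A) := by
        refine Finset.sum_subset hsupp (fun j _ hj => ?_)
        rw [DFinsupp.notMem_support_iff.mp hj, ZeroMemClass.coe_zero]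
      _ = (∑ j ∈ Finset.range Nb, (DirectSum.decompose 𝒜 a (j + 1) : A))
            + (DirectSum.decompose 𝒜 a 0 : A) := Finset.sum_range_succ' _ Nb
      _ = ∑ j : Fin Nb, (DirectSum.decompose 𝒜 a (j.1 + 1) : A) := by
        rw [h0, add_zero, ← Fin.sum_univ_eq_sum_range]
  have hgen : ∀ x ∈ geIdeal 𝒜 1, ∃ u : ↥s × Fin Nb → A, x = ∑ i, g i * u i := by
    let T : AddSubgroup A :=
      { carrier := {x | ∃ u : ↥s × Fin Nb → A, x = ∑ i, g i * u i}
        zero_mem' := ⟨0, by simp⟩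
        add_mem' := by
          rintro x y ⟨u, rfl⟩ ⟨v, rfl⟩
          exact ⟨u + v, by simp [mul_add, Finset.sum_add_distrib]⟩
        neg_mem' := by
          rintro x ⟨u, rfl⟩
          exact ⟨-u, by simp [mul_neg, Finset.sum_neg_distrib]⟩ }
    have hle : AddSubgroup.closure {y : A | ∃ a ∈ (s : Set A), ∃ r : A, y = a * r} ≤ T := by
      rw [AddSubgroup.closure_le]
      rintro y ⟨a, ha, r, rfl⟩
      refine ⟨fun i => if (i.1 : A) = a then r else 0, ?_⟩
      have : ∀ b : ↥s, ((b : A) = a) = (b = (⟨a, ha⟩ : ↥s)) := by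
        intro b; simp [Subtype.ext_iff]
      calc a * r = (∑ j : Fin Nb, (DirectSum.decompose 𝒜 a (j.1 + 1) : A)) * r := by
            rw [← hdecomp_a a ha]
        _ = ∑ j : Fin Nb, (DirectSum.decompose 𝒜 a (j.1 + 1) : A) * r := Finset.sum_mul _ _ _
        _ = ∑ b : ↥s, if b = (⟨a, ha⟩ : ↥s) then
              ∑ j : Fin Nb, (DirectSum.decompose 𝒜 (b : A) (j.1 + 1) : A) * r else 0 := by
            rw [Finset.sum_ite_eq' Finset.univ (⟨a, ha⟩ : ↥s), if_pos (Finset.mem_univ _)]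
        _ = ∑ i : ↥s × Fin Nb, g i * (if (i.1 : A) = a then r else 0) := by
            rw [Fintype.sum_prod_type]
            refine Finset.sum_congr rfl fun b _ => ?_
            simp only [this, mul_ite, mul_zero]
            by_cases hb : b = (⟨a, ha⟩ : ↥s) <;> simp [hb, hgdef]
    intro x hx
    rw [hs] at hx
    exact hle hx
  intro m
  obtain ⟨c, hc⟩ := hMK (Submodule.Quotient.mk m)
  exact aux_induction 𝒜 g d hg hd hgen M K hK c m hc
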